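/- (Tensor–matrix spectral norm connection.) Let T ∈ ℝ^{n₁×n₂×n₃} be a 3-way tensor and for j = 1,2,3 let r_j = rank(M_j(T)) be its multilinear ranks. Then for each j ∈ {1,2,3}, the matrix operator norm of the mode-j matricization satisfies ‖M_j(T)‖ ≤ ‖T‖ · √( (r₁ r₂ r₃ / r_j) / max_{j' ≠ j} r_{j'} ), where ‖T‖ is the tensor spectral norm. In particular, ‖M₁(T)‖ ≤ ‖T‖ √(min(r₂, r₃)). -/

import Mathlib

/-- The spectral norm of a 3-way tensor. -/
noncomputable def tensorNorm {n₁ n₂ n₃ : ℕ} (T : Fin n₁ → Fin n₂ → Fin n₃ → ℝ) : ℝ :=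
  sSup {x | ∃ (u₁ : Fin n₁ → ℝ) (u₂ : Fin n₂ → ℝ) (u₃ : Fin n₃ → ℝ),
    (∑ i, (u₁ i) ^ 2 ≤ 1) ∧ (∑ i, (u₂ i) ^ 2 ≤ 1) ∧ (∑ i, (u₃ i) ^ 2 ≤ 1) ∧
    x = ∑ i₁, ∑ i₂, ∑ i₃, T i₁ i₂ i₃ * u₁ i₁ * u₂ i₂ * u₃ i₃}

/-- The matrix operator (spectral) norm, expressed as a bilinear supremum. -/
noncomputable def matOpNorm {α β : Type*} [Fintype α] [Fintype β]
    (M : α → β → ℝ) : ℝ :=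
  sSup {x | ∃ (u : α → ℝ) (v : β → ℝ),
    (∑ a, (u a) ^ 2 ≤ 1) ∧ (∑ b, (v b) ^ 2 ≤ 1) ∧
    x = ∑ a, ∑ b, u a * M a b * v b}

section Aux

open Matrix

variable {n₁ n₂ n₃ : ℕ}

lemma tensor_form_le_tensorNorm (T : Fin n₁ → Fin n₂ → Fin n₃ → ℝ)
    (u₁ : Fin n₁ → ℝ) (u₂ : Fin n₂ → ℝ) (u₃ : Fin n₃ → ℝ)
    (h₁ : ∑ i, (u₁ i) ^ 2 ≤ 1) (h₂ : ∑ i, (u₂ i) ^ 2 ≤ 1) (h₃ : ∑ i, (u₃ i) ^ 2 ≤ 1) :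
    ∑ i₁, ∑ i₂, ∑ i₃, T i₁ i₂ i₃ * u₁ i₁ * u₂ i₂ * u₃ i₃ ≤ tensorNorm T := by
  have habs : ∀ {m : ℕ} (u : Fin m → ℝ), (∑ i, (u i) ^ 2 ≤ 1) → ∀ i, |u i| ≤ 1 := by
    intro m u hu i
    have h := le_trans (Finset.single_le_sum (f := fun i => u i ^ 2)
        (fun j _ => sq_nonneg (u j)) (Finset.mem_univ i)) hu
    have h' : u i ^ 2 ≤ 1 := h
    nlinarith [abs_nonneg (u i), sq_abs (u i)]
  apply le_csSup
  · refine ⟨∑ i₁, ∑ i₂, ∑ i₃, |T i₁ i₂ i₃|, ?_⟩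
    rintro x ⟨v₁, v₂, v₃, g₁, g₂, g₃, rfl⟩
    calc ∑ i₁, ∑ i₂, ∑ i₃, T i₁ i₂ i₃ * v₁ i₁ * v₂ i₂ * v₃ i₃
        ≤ |∑ i₁, ∑ i₂, ∑ i₃, T i₁ i₂ i₃ * v₁ i₁ * v₂ i₂ * v₃ i₃| := le_abs_self _
      _ ≤ ∑ i₁, ∑ i₂, ∑ i₃, |T i₁ i₂ i₃| := by
          refine le_trans (Finset.abs_sum_le_sum_abs _ _) (Finset.sum_le_sum fun i₁ _ => ?_)
          refine le_trans (Finset.abs_sum_le_sum_abs _ _) (Finset.sum_le_sum fun i₂ _ => ?_)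
          refine le_trans (Finset.abs_sum_le_sum_abs _ _) (Finset.sum_le_sum fun i₃ _ => ?_)
          rw [abs_mul, abs_mul, abs_mul]
          calc |T i₁ i₂ i₃| * |v₁ i₁| * |v₂ i₂| * |v₃ i₃|
              ≤ |T i₁ i₂ i₃| * 1 * 1 * 1 := by
                gcongr <;> first
                  | exact abs_nonneg _
                  | exact habs v₁ g₁ i₁ | exact habs v₂ g₂ i₂ | exact habs v₃ g₃ i₃
            _ = |T i₁ i₂ i₃| := by ring
  · exact ⟨u₁, u₂, u₃, h₁, h₂, h₃, rfl⟩

lemma tensorNorm_nonneg (T : Fin n₁ → Fin n₂ → Fin n₃ → ℝ) : 0 ≤ tensorNorm T := by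
  have := tensor_form_le_tensorNorm T 0 0 0 (by simp) (by simp) (by simp)
  simpa using this

end Aux

section Key

open Matrix

variable {n₁ n₂ n₃ : ℕ}

/-- triple sum rotation -/
lemma sum_rotate {f : Fin n₁ → Fin n₂ → Fin n₃ → ℝ} :
    ∑ a, ∑ b, ∑ c, f a b c = ∑ b, ∑ c, ∑ a, f a b c := by
  rw [Finset.sum_comm]
  exact Finset.sum_congr rfl fun b _ => Finset.sum_comm

lemma key (T : Fin n₁ → Fin n₂ → Fin n₃ → ℝ) (r₂ r₃ : ℕ)
    (hr₂ : r₂ = (Matrix.of fun i (p : Fin n₁ × Fin n₃) => T p.1 i p.2).rank)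
    (hr₃ : r₃ = (Matrix.of fun i (p : Fin n₁ × Fin n₂) => T p.1 p.2 i).rank) :
    matOpNorm (fun i (p : Fin n₂ × Fin n₃) => T i p.1 p.2)
      ≤ tensorNorm T * Real.sqrt (min (r₂ : ℝ) (r₃ : ℝ)) := by
  set B := tensorNorm T with hBdef
  have hB0 : 0 ≤ B := tensorNorm_nonneg T
  refine Real.sSup_le ?_ (mul_nonneg hB0 (Real.sqrt_nonneg _))
  rintro x ⟨u, v, hu, hv, rfl⟩
  set A : Matrix (Fin n₂) (Fin n₃) ℝ := Matrix.of fun j k => ∑ i, u i * T i j k with hAdef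
  -- the bilinear form of A is bounded by B
  have hform : ∀ (w : Fin n₂ → ℝ) (z : Fin n₃ → ℝ), (∑ j, (w j) ^ 2 ≤ 1) →
      (∑ k, (z k) ^ 2 ≤ 1) → ∑ j, w j * (∑ k, A j k * z k) ≤ B := by
    intro w z hw hz
    have h := tensor_form_le_tensorNorm T u w z hu hw hz
    refine le_trans (le_of_eq ?_) h
    rw [sum_rotate (f := fun i j k => T i j k * u i * w j * z k)]
    refine Finset.sum_congr rfl fun j _ => ?_
    rw [Finset.mul_sum]
    refine Finset.sum_congr rfl fun k _ => ?_
    simp only [hAdef, Matrix.of_apply, Finset.mul_sum, Finset.sum_mul]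
    exact Finset.sum_congr rfl fun i _ => by ring
  -- any unit vector image has norm ≤ B
  have himg : ∀ (z : Fin n₃ → ℝ), (∑ k, (z k) ^ 2 ≤ 1) →
      ∑ j, (∑ k, A j k * z k) ^ 2 ≤ B ^ 2 := by
    intro z hz
    set y : Fin n₂ → ℝ := fun j => ∑ k, A j k * z k with hy
    rcases eq_or_lt_of_le (Finset.sum_nonneg fun j (_ : j ∈ Finset.univ) => sq_nonneg (y j)) with h0 | hpos
    · rw [← h0]; positivity
    · set c : ℝ := Real.sqrt (∑ j, (y j) ^ 2) with hc
      have hc0 : 0 < c := Real.sqrt_pos.mpr hpos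
      have hc2 : c ^ 2 = ∑ j, (y j) ^ 2 := Real.sq_sqrt (le_of_lt hpos)
      have hwsum : ∑ j, (y j / c) ^ 2 = 1 := by
        simp only [div_pow, ← Finset.sum_div, ← hc2]
        field_simp
      have := hform (fun j => y j / c) z (le_of_eq hwsum) hz
      have hyc : ∑ j, (y j / c) * y j = c := by
        have : ∑ j, (y j / c) * y j = (∑ j, (y j) ^ 2) / c := by
          rw [Finset.sum_div]
          exact Finset.sum_congr rfl fun j _ => by ring
        rw [this, ← hc2, sq, mul_div_assoc, div_self hc0.ne', mul_one]
      rw [show (∑ j, (fun j => y j / c) j * y j) = c from hyc] at this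
      calc ∑ j, (y j) ^ 2 = c ^ 2 := hc2.symm
        _ ≤ B ^ 2 := by nlinarith
  -- spectral analysis of G = Aᴴ * A
  set G : Matrix (Fin n₃) (Fin n₃) ℝ := A.conjTranspose * A with hG
  have hGherm : G.IsHermitian := Matrix.isHermitian_conjTranspose_mul_self A
  -- eigenvalue bound
  have heig : ∀ i, hGherm.eigenvalues i ≤ B ^ 2 := by
    intro i
    set xv : Fin n₃ → ℝ := ⇑(hGherm.eigenvectorBasis i) with hxv
    have hxnorm : ∑ k, (xv k) ^ 2 = 1 := by
      have h1 : ‖(hGherm.eigenvectorBasis i : EuclideanSpace ℝ (Fin n₃))‖ = 1 :=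
        hGherm.eigenvectorBasis.orthonormal.1 i
      have h2 := EuclideanSpace.norm_eq (hGherm.eigenvectorBasis i : EuclideanSpace ℝ (Fin n₃))
      rw [h1] at h2
      have h3 : (1 : ℝ) = Real.sqrt (∑ k, ‖xv k‖ ^ 2) := h2
      have h4 := congrArg (fun t : ℝ => t ^ 2) h3
      simp only [one_pow] at h4
      rw [Real.sq_sqrt (Finset.sum_nonneg fun k _ => by positivity)] at h4
      have h5 : ∑ k, (xv k) ^ 2 = ∑ k, ‖xv k‖ ^ 2 :=
        Finset.sum_congr rfl fun k _ => by rw [Real.norm_eq_abs, sq_abs]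
      rw [h5, ← h4]
    have hmul := hGherm.mulVec_eigenvectorBasis i
    -- μ = ∑_j (∑_k A j k * xv k)^2
    have hmu : hGherm.eigenvalues i = ∑ j, (∑ k, A j k * xv k) ^ 2 := by
      have e1 : hGherm.eigenvalues i = ∑ k, (G.mulVec xv) k * xv k := by
        rw [show G.mulVec xv = hGherm.eigenvalues i • xv from hmul]
        simp only [Pi.smul_apply, smul_eq_mul]
        rw [show ∑ k, hGherm.eigenvalues i * xv k * xv k
            = hGherm.eigenvalues i * ∑ k, (xv k) ^ 2 by
          rw [Finset.mul_sum]; exact Finset.sum_congr rfl fun k _ => by ring]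
        rw [hxnorm, mul_one]
      have e2 : ∀ k, (G.mulVec xv) k = ∑ j, A j k * (∑ l, A j l * xv l) := by
        intro k
        show ∑ l, G k l * xv l = _
        calc ∑ l, G k l * xv l
            = ∑ l, ∑ j, A j k * A j l * xv l := by
              refine Finset.sum_congr rfl fun l _ => ?_
              rw [show G k l = ∑ j, A j k * A j l from by
                simp [hG, Matrix.mul_apply, Matrix.conjTranspose_apply]]
              rw [Finset.sum_mul]
          _ = ∑ j, ∑ l, A j k * A j l * xv l := Finset.sum_comm
          _ = ∑ j, A j k * (∑ l, A j l * xv l) := by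
              refine Finset.sum_congr rfl fun j _ => ?_
              rw [Finset.mul_sum]
              exact Finset.sum_congr rfl fun l _ => by ring
      rw [e1]
      calc ∑ k, (G.mulVec xv) k * xv k
          = ∑ k, ∑ j, (A j k * (∑ l, A j l * xv l)) * xv k := by
            refine Finset.sum_congr rfl fun k _ => ?_
            rw [e2 k, Finset.sum_mul]
        _ = ∑ j, ∑ k, (A j k * (∑ l, A j l * xv l)) * xv k := Finset.sum_comm
        _ = ∑ j, (∑ k, A j k * xv k) ^ 2 := by
            refine Finset.sum_congr rfl fun j _ => ?_
            conv_rhs => rw [pow_two, Finset.sum_mul]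
            exact Finset.sum_congr rfl fun k _ => by ring
    rw [hmu]
    exact himg xv (le_of_eq hxnorm)
  -- trace of G equals sum of eigenvalues
  have htrace : G.trace = ∑ i, hGherm.eigenvalues i := by
    conv_lhs => rw [hGherm.spectral_theorem, Unitary.conjStarAlgAut_apply]
    rw [Matrix.trace_mul_cycle]
    rw [show (star (hGherm.eigenvectorUnitary : Matrix (Fin n₃) (Fin n₃) ℝ)) *
        (hGherm.eigenvectorUnitary : Matrix (Fin n₃) (Fin n₃) ℝ) = 1 from
      Unitary.coe_star_mul_self _]
    rw [one_mul, Matrix.trace_diagonal]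
    simp [RCLike.ofReal]
  -- trace of G is the Frobenius norm squared of A
  have hfrob : ∑ j, ∑ k, (A j k) ^ 2 = G.trace := by
    rw [Matrix.trace]
    rw [Finset.sum_comm]
    refine Finset.sum_congr rfl fun k _ => ?_
    simp only [Matrix.diag_apply, hG, Matrix.mul_apply, Matrix.conjTranspose_apply, star_trivial]
    exact Finset.sum_congr rfl fun j _ => by ring
  -- rank bound
  have hrankA : A.rank ≤ min r₂ r₃ := by
    have h2 : A.rank ≤ r₂ := by
      rw [hr₂]
      have : A = (Matrix.of fun i (p : Fin n₁ × Fin n₃) => T p.1 i p.2) *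
          (Matrix.of fun (p : Fin n₁ × Fin n₃) (k : Fin n₃) =>
            if p.2 = k then u p.1 else 0) := by
        ext j k
        simp only [Matrix.mul_apply, Matrix.of_apply, hAdef, mul_ite, mul_zero]
        rw [Fintype.sum_prod_type]
        simp only [Finset.sum_ite_eq, Finset.sum_ite_eq', Finset.mem_univ, if_true]
        exact Finset.sum_congr rfl fun i _ => by ring
      rw [this]
      exact Matrix.rank_mul_le_left _ _
    have h3 : A.rank ≤ r₃ := by
      rw [hr₃, ← Matrix.rank_transpose A]
      have : Aᵀ = (Matrix.of fun i (p : Fin n₁ × Fin n₂) => T p.1 p.2 i) *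
          (Matrix.of fun (p : Fin n₁ × Fin n₂) (j : Fin n₂) =>
            if p.2 = j then u p.1 else 0) := by
        ext k j
        simp only [Matrix.transpose_apply, Matrix.mul_apply, Matrix.of_apply, hAdef,
          mul_ite, mul_zero]
        rw [Fintype.sum_prod_type]
        simp only [Finset.sum_ite_eq, Finset.sum_ite_eq', Finset.mem_univ, if_true]
        exact Finset.sum_congr rfl fun i _ => by ring
      rw [this]
      exact Matrix.rank_mul_le_left _ _
    exact le_min h2 h3
  have hrankG : G.rank = A.rank := Matrix.rank_conjTranspose_mul_self A
  -- sum of eigenvalues ≤ rank * B²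
  have hsum : ∑ i, hGherm.eigenvalues i ≤ (A.rank : ℝ) * B ^ 2 := by
    classical
    have h1 : ∑ i, hGherm.eigenvalues i
        = ∑ i ∈ Finset.univ.filter (fun i => hGherm.eigenvalues i ≠ 0),
            hGherm.eigenvalues i := (Finset.sum_filter_ne_zero _).symm
    have h2 : (Finset.univ.filter (fun i => hGherm.eigenvalues i ≠ 0)).card = A.rank := by
      rw [← hrankG, hGherm.rank_eq_card_non_zero_eigs, Fintype.card_subtype]
    rw [h1, ← h2]
    have := Finset.sum_le_card_nsmul
      (Finset.univ.filter (fun i => hGherm.eigenvalues i ≠ 0))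
      hGherm.eigenvalues (B ^ 2) (fun i _ => heig i)
    simpa [nsmul_eq_mul] using this
  -- putting it together: Frobenius bound
  have hfrobB : ∑ j, ∑ k, (A j k) ^ 2 ≤ min (r₂ : ℝ) (r₃ : ℝ) * B ^ 2 := by
    rw [hfrob, htrace]
    refine le_trans hsum ?_
    have : (A.rank : ℝ) ≤ min (r₂ : ℝ) (r₃ : ℝ) := by
      rw [← Nat.cast_min]
      exact_mod_cast hrankA
    nlinarith [sq_nonneg B]
  -- Cauchy-Schwarz step
  have hsum_eq : ∑ i, ∑ p : Fin n₂ × Fin n₃, u i * T i p.1 p.2 * v p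
      = ∑ p : Fin n₂ × Fin n₃, A p.1 p.2 * v p := by
    rw [Finset.sum_comm]
    refine Finset.sum_congr rfl fun p _ => ?_
    simp only [hAdef, Matrix.of_apply, Finset.sum_mul]
  show ∑ i, ∑ p : Fin n₂ × Fin n₃, u i * T i p.1 p.2 * v p ≤ B * Real.sqrt (min (r₂ : ℝ) (r₃ : ℝ))
  rw [hsum_eq]
  have hCS : (∑ p : Fin n₂ × Fin n₃, A p.1 p.2 * v p) ^ 2
      ≤ (∑ p : Fin n₂ × Fin n₃, (A p.1 p.2) ^ 2) * ∑ p : Fin n₂ × Fin n₃, (v p) ^ 2 :=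
    Finset.sum_mul_sq_le_sq_mul_sq _ _ _
  have hAsum : ∑ p : Fin n₂ × Fin n₃, (A p.1 p.2) ^ 2 = ∑ j, ∑ k, (A j k) ^ 2 :=
    Fintype.sum_prod_type _
  have hA2 : (∑ p : Fin n₂ × Fin n₃, A p.1 p.2 * v p) ^ 2 ≤ min (r₂ : ℝ) (r₃ : ℝ) * B ^ 2 := by
    have hAnn : 0 ≤ ∑ p : Fin n₂ × Fin n₃, (A p.1 p.2) ^ 2 :=
      Finset.sum_nonneg fun p _ => sq_nonneg _
    calc (∑ p : Fin n₂ × Fin n₃, A p.1 p.2 * v p) ^ 2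
        ≤ (∑ p : Fin n₂ × Fin n₃, (A p.1 p.2) ^ 2) * ∑ p : Fin n₂ × Fin n₃, (v p) ^ 2 := hCS
      _ ≤ (∑ p : Fin n₂ × Fin n₃, (A p.1 p.2) ^ 2) * 1 := by gcongr
      _ = ∑ j, ∑ k, (A j k) ^ 2 := by rw [mul_one, hAsum]
      _ ≤ min (r₂ : ℝ) (r₃ : ℝ) * B ^ 2 := hfrobB
  calc ∑ p : Fin n₂ × Fin n₃, A p.1 p.2 * v p
      ≤ |∑ p : Fin n₂ × Fin n₃, A p.1 p.2 * v p| := le_abs_self _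
    _ ≤ Real.sqrt (min (r₂ : ℝ) (r₃ : ℝ) * B ^ 2) := Real.abs_le_sqrt hA2
    _ = B * Real.sqrt (min (r₂ : ℝ) (r₃ : ℝ)) := by
        rw [Real.sqrt_mul' _ (sq_nonneg B), Real.sqrt_sq hB0, mul_comm]

end Key

section Perm

open Matrix

variable {n₁ n₂ n₃ : ℕ}

lemma tensorNorm_perm12_le (T : Fin n₁ → Fin n₂ → Fin n₃ → ℝ) :
    tensorNorm (fun b a c => T a b c) ≤ tensorNorm T := by
  refine Real.sSup_le ?_ (tensorNorm_nonneg T)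
  rintro x ⟨w₁, w₂, w₃, h₁, h₂, h₃, rfl⟩
  refine le_trans (le_of_eq ?_) (tensor_form_le_tensorNorm T w₂ w₁ w₃ h₂ h₁ h₃)
  rw [Finset.sum_comm]
  refine Finset.sum_congr rfl fun a _ => Finset.sum_congr rfl fun b _ =>
    Finset.sum_congr rfl fun c _ => by ring

lemma tensorNorm_perm3_le (T : Fin n₁ → Fin n₂ → Fin n₃ → ℝ) :
    tensorNorm (fun c a b => T a b c) ≤ tensorNorm T := by
  refine Real.sSup_le ?_ (tensorNorm_nonneg T)
  rintro x ⟨w₁, w₂, w₃, h₁, h₂, h₃, rfl⟩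
  refine le_trans (le_of_eq ?_) (tensor_form_le_tensorNorm T w₂ w₃ w₁ h₂ h₃ h₁)
  rw [sum_rotate (f := fun c a b => T a b c * w₁ c * w₂ a * w₃ b)]
  refine Finset.sum_congr rfl fun a _ => Finset.sum_congr rfl fun b _ =>
    Finset.sum_congr rfl fun c _ => by ring

/-- rank is invariant under swapping the two factors of a product column index. -/
lemma rank_prodComm {α β γ : Type*} [Fintype α] [Fintype β] [Fintype γ]
    [DecidableEq α] [DecidableEq β]
    (M : Matrix γ (α × β) ℝ) :
    (Matrix.of fun i (p : β × α) => M i (p.2, p.1)).rank = M.rank := by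
  have h1 : (Matrix.of fun i (p : β × α) => M i (p.2, p.1))
      = M * (Matrix.of fun (q : α × β) (p : β × α) =>
          if q = (p.2, p.1) then (1 : ℝ) else 0) := by
    ext i p
    simp [Matrix.mul_apply, Finset.sum_ite_eq', mul_ite]
  have h2 : M = (Matrix.of fun i (p : β × α) => M i (p.2, p.1)) *
      (Matrix.of fun (q : β × α) (p : α × β) =>
          if q = (p.2, p.1) then (1 : ℝ) else 0) := by
    ext i p
    simp [Matrix.mul_apply, Finset.sum_ite_eq', mul_ite]
  refine le_antisymm ?_ ?_
  · rw [h1]; exact Matrix.rank_mul_le_left _ _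
  · conv_lhs => rw [h2]
    exact Matrix.rank_mul_le_left _ _

lemma rank_pos_of_entry_ne {m n : Type*} [Fintype m] [Fintype n] [DecidableEq n]
    (M : Matrix m n ℝ) (i : m) (j : n) (h : M i j ≠ 0) : M.rank ≠ 0 := by
  intro h0
  rw [Matrix.rank] at h0
  rw [Submodule.finrank_eq_zero] at h0
  have hmem : M.mulVec (Pi.single j 1) ∈ LinearMap.range M.mulVecLin :=
    ⟨Pi.single j 1, rfl⟩
  rw [h0, Submodule.mem_bot] at hmem
  apply h
  have := congrFun hmem i
  simpa [Matrix.mulVec_single] using this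

end Perm

/-- **Tensor–matrix spectral norm connection** (Lemma 7 of the paper, from
Xia–Yuan): if `T` has multilinear ranks `(r₁,r₂,r₃)` then
`‖M_j(T)‖ ≤ ‖T‖ √((r₁r₂r₃/r_j)/max_{j'≠j} r_{j'})`; in particular
`‖M₁(T)‖ ≤ ‖T‖ √(min(r₂,r₃))`. -/
theorem matricization_opnorm_le_tensorNorm
    (n₁ n₂ n₃ : ℕ) (T : Fin n₁ → Fin n₂ → Fin n₃ → ℝ)
    (r₁ r₂ r₃ : ℕ)
    (hr₁ : r₁ = (Matrix.of fun i (p : Fin n₂ × Fin n₃) => T i p.1 p.2).rank)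
    (hr₂ : r₂ = (Matrix.of fun i (p : Fin n₁ × Fin n₃) => T p.1 i p.2).rank)
    (hr₃ : r₃ = (Matrix.of fun i (p : Fin n₁ × Fin n₂) => T p.1 p.2 i).rank) :
    (matOpNorm (fun i (p : Fin n₂ × Fin n₃) => T i p.1 p.2)
      ≤ tensorNorm T *
          Real.sqrt ((((r₁ : ℝ) * r₂ * r₃) / r₁) / max (r₂ : ℝ) (r₃ : ℝ))) ∧
    (matOpNorm (fun i (p : Fin n₁ × Fin n₃) => T p.1 i p.2)
      ≤ tensorNorm T *
          Real.sqrt ((((r₁ : ℝ) * r₂ * r₃) / r₂) / max (r₁ : ℝ) (r₃ : ℝ))) ∧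
    (matOpNorm (fun i (p : Fin n₁ × Fin n₂) => T p.1 p.2 i)
      ≤ tensorNorm T *
          Real.sqrt ((((r₁ : ℝ) * r₂ * r₃) / r₃) / max (r₁ : ℝ) (r₂ : ℝ))) ∧
    (matOpNorm (fun i (p : Fin n₂ × Fin n₃) => T i p.1 p.2)
      ≤ tensorNorm T * Real.sqrt (min (r₂ : ℝ) (r₃ : ℝ))) := by
  have hB0 : 0 ≤ tensorNorm T := tensorNorm_nonneg T
  by_cases hT : ∀ a b c, T a b c = 0
  · refine ⟨?_, ?_, ?_, ?_⟩ <;>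
    · refine Real.sSup_le ?_ (mul_nonneg hB0 (Real.sqrt_nonneg _))
      rintro x ⟨u, v, _, _, rfl⟩
      simp only [hT, mul_zero, zero_mul, Finset.sum_const_zero]
      exact mul_nonneg hB0 (Real.sqrt_nonneg _)
  · push_neg at hT
    obtain ⟨a, b, c, habc⟩ := hT
    have hr1ne : r₁ ≠ 0 := by
      rw [hr₁]; exact rank_pos_of_entry_ne _ a (b, c) habc
    have hr2ne : r₂ ≠ 0 := by
      rw [hr₂]; exact rank_pos_of_entry_ne _ b (a, c) habc
    have hr3ne : r₃ ≠ 0 := by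
      rw [hr₃]; exact rank_pos_of_entry_ne _ c (a, b) habc
    have p1 : (0 : ℝ) < r₁ := Nat.cast_pos.mpr (Nat.pos_of_ne_zero hr1ne)
    have p2 : (0 : ℝ) < r₂ := Nat.cast_pos.mpr (Nat.pos_of_ne_zero hr2ne)
    have p3 : (0 : ℝ) < r₃ := Nat.cast_pos.mpr (Nat.pos_of_ne_zero hr3ne)
    have hmm : ∀ y z : ℝ, 0 < y → 0 < z → y * z / max y z = min y z := by
      intro y z hy hz
      rcases le_total y z with h | h
      · rw [max_eq_right h, min_eq_left h, mul_div_assoc, div_self hz.ne', mul_one]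
      · rw [max_eq_left h, min_eq_right h, mul_comm, mul_div_assoc, div_self hy.ne',
          mul_one]
    have e1 : (((r₁ : ℝ) * r₂ * r₃) / r₁) / max (r₂ : ℝ) (r₃ : ℝ) = min (r₂ : ℝ) r₃ := by
      rw [show ((r₁ : ℝ) * r₂ * r₃) / r₁ = (r₂ : ℝ) * r₃ by field_simp; try ring]
      exact hmm _ _ p2 p3
    have e2 : (((r₁ : ℝ) * r₂ * r₃) / r₂) / max (r₁ : ℝ) (r₃ : ℝ) = min (r₁ : ℝ) r₃ := by
      rw [show ((r₁ : ℝ) * r₂ * r₃) / r₂ = (r₁ : ℝ) * r₃ by field_simp; try ring]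
      exact hmm _ _ p1 p3
    have e3 : (((r₁ : ℝ) * r₂ * r₃) / r₃) / max (r₁ : ℝ) (r₂ : ℝ) = min (r₁ : ℝ) r₂ := by
      rw [show ((r₁ : ℝ) * r₂ * r₃) / r₃ = (r₁ : ℝ) * r₂ by field_simp; try ring]
      exact hmm _ _ p1 p2
    have k1 := key T r₂ r₃ hr₂ hr₃
    have k2 : matOpNorm (fun i (p : Fin n₁ × Fin n₃) => T p.1 i p.2)
        ≤ tensorNorm (fun b a c => T a b c) * Real.sqrt (min (r₁ : ℝ) (r₃ : ℝ)) :=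
      key (fun b a c => T a b c) r₁ r₃ hr₁ (hr₃.trans (rank_prodComm _).symm)
    have k3 : matOpNorm (fun i (p : Fin n₁ × Fin n₂) => T p.1 p.2 i)
        ≤ tensorNorm (fun c a b => T a b c) * Real.sqrt (min (r₁ : ℝ) (r₂ : ℝ)) :=
      key (fun c a b => T a b c) r₁ r₂ (hr₁.trans (rank_prodComm _).symm)
        (hr₂.trans (rank_prodComm _).symm)
    refine ⟨?_, ?_, ?_, k1⟩
    · rw [e1]; exact k1
    · rw [e2]
      exact le_trans k2 (mul_le_mul_of_nonneg_right (tensorNorm_perm12_le T)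
        (Real.sqrt_nonneg _))
    · rw [e3]
      exact le_trans k3 (mul_le_mul_of_nonneg_right (tensorNorm_perm3_le T)
        (Real.sqrt_nonneg _))
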